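/- The group R5 = (R3 ×_sign S24) ×_sign (S24 × S24) has order equal to |R3| · (24!)^3 / 4, which equals 2582636272886959379162819698174683585918088940054237132144778804568925405184000000000000000. -/

import Mathlib

open Equiv

/-- The automorphism of `(Z/n)^m` (written multiplicatively) permuting coordinates by `σ`. -/
def permAut (n m : ℕ) (σ : Equiv.Perm (Fin m)) :
    MulAut (Fin m → Multiplicative (ZMod n)) :=
  { Equiv.piCongrLeft' (fun _ => Multiplicative (ZMod n)) σ with
    map_mul' := fun _ _ => rfl }

/-- The action of `S_m` on `(Z/n)^m` permuting coordinates. -/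
def permHom (n m : ℕ) : Equiv.Perm (Fin m) →* MulAut (Fin m → Multiplicative (ZMod n)) where
  toFun := permAut n m
  map_one' := by ext x i; rfl
  map_mul' := fun σ τ => by ext x i; rfl

/-- The wreath product `C_n ≀ S_m = (Z/n)^m ⋊ S_m`, where `S_m` permutes coordinates. -/
abbrev Wr (n m : ℕ) :=
  SemidirectProduct (Fin m → Multiplicative (ZMod n)) (Equiv.Perm (Fin m)) (permHom n m)

/-- The homomorphism `C_n ≀ S_m → Z/n`, `(x, σ) ↦ ∑ i, x i`. -/
def sumHom (n m : ℕ) : Wr n m →* Multiplicative (ZMod n) :=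
  SemidirectProduct.lift
    (MonoidHom.mk' (fun x => ∏ i, x i) (by intro a b; simp [Finset.prod_mul_distrib]))
    1
    (by
      intro σ
      refine MonoidHom.ext fun x => ?_
      simp
      exact Equiv.prod_comp σ.symm x)

/-- `(C_n ≀ S_m)^°`, the kernel of `(x, σ) ↦ ∑ i, x i`. -/
abbrev WrO (n m : ℕ) : Subgroup (Wr n m) := (sumHom n m).ker

/-- The sign homomorphism `(C_n ≀ S_m)^° → {±1}`, `(x, σ) ↦ sign σ`. -/
def signW (n m : ℕ) : ↥(WrO n m) →* ℤˣ :=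
  (Equiv.Perm.sign.comp SemidirectProduct.rightHom).comp (WrO n m).subtype

/-- The fiber product `G ×_{φ,ψ} H = {(a, b) : φ a = ψ b}` of two group homomorphisms,
as a subgroup of the direct product `G × H`. -/
def fiberProduct {G H K : Type*} [Group G] [Group H] [Group K]
    (φ : G →* K) (ψ : H →* K) : Subgroup (G × H) where
  carrier := {p | φ p.1 = ψ p.2}
  one_mem' := by simp
  mul_mem' := by
    intro a b ha hb
    simp only [Set.mem_setOf_eq, Prod.fst_mul, Prod.snd_mul, map_mul] at *
    rw [ha, hb]
  inv_mem' := by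
    intro a ha
    simp only [Set.mem_setOf_eq, Prod.fst_inv, Prod.snd_inv, map_inv] at *
    rw [ha]

/-- The Rubik's Cube group `R3 = (C3 ≀ S8)^° ×_sign (C2 ≀ S12)^°`. -/
abbrev RubikR3 : Subgroup (↥(WrO 3 8) × ↥(WrO 2 12)) :=
  fiberProduct (signW 3 8) (signW 2 12)

/-- The sign of the corner permutation `σc`, as a homomorphism on `R3`
(recall that `sign σc = sign σe` on `R3`). -/
def signCorners : ↥RubikR3 →* ℤˣ :=
  ((signW 3 8).comp (MonoidHom.fst _ _)).comp RubikR3.subtype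

/-- The fiber product `R3 ×_sign S24`, with respect to `(x, σc, y, σe) ↦ sign σc` and
`τ ↦ sign τ`. -/
abbrev R3xS24 : Subgroup (↥RubikR3 × Equiv.Perm (Fin 24)) :=
  fiberProduct signCorners (Equiv.Perm.sign : Equiv.Perm (Fin 24) →* ℤˣ)

/-- The map `(x, σc, y, σe, τ) ↦ sign τ` on `R3 ×_sign S24`. -/
def signTau : ↥R3xS24 →* ℤˣ :=
  ((Equiv.Perm.sign : Equiv.Perm (Fin 24) →* ℤˣ).comp (MonoidHom.snd _ _)).comp
    R3xS24.subtype

/-- The map `(ρc, ρe) ↦ sign ρc` on `S24 × S24`. -/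
def signRhoC : Equiv.Perm (Fin 24) × Equiv.Perm (Fin 24) →* ℤˣ :=
  (Equiv.Perm.sign : Equiv.Perm (Fin 24) →* ℤˣ).comp (MonoidHom.fst _ _)

/-- The Professor's Cube group `R5 = (R3 ×_sign S24) ×_sign (S24 × S24)`. -/
abbrev ProfR5 : Subgroup (↥R3xS24 × (Equiv.Perm (Fin 24) × Equiv.Perm (Fin 24))) :=
  fiberProduct signTau signRhoC

section Aux

/-- `SemidirectProduct` is equivalent to the product type. -/
def sdpEquiv (N G : Type*) [Group N] [Group G] (φ : G →* MulAut N) :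
    SemidirectProduct N G φ ≃ N × G where
  toFun x := (x.left, x.right)
  invFun p := ⟨p.1, p.2⟩
  left_inv _ := rfl
  right_inv _ := rfl

instance {N G : Type*} [Group N] [Group G] [Finite N] [Finite G] (φ : G →* MulAut N) :
    Finite (SemidirectProduct N G φ) := Finite.of_equiv _ (sdpEquiv N G φ).symm

theorem card_ker_mul {H K : Type*} [Group H] [Group K] (ψ : H →* K) [Finite H]
    (hψ : Function.Surjective ψ) :
    Nat.card K * Nat.card ψ.ker = Nat.card H := by
  rw [Subgroup.card_eq_card_quotient_mul_card_subgroup ψ.ker,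
    Nat.card_congr (QuotientGroup.quotientKerEquivOfSurjective ψ hψ).toEquiv]

/-- The fiber product is equivalent to `G × ker ψ` when `ψ` is surjective. -/
noncomputable def fiberProductEquiv {G H K : Type*} [Group G] [Group H] [Group K]
    (φ : G →* K) (ψ : H →* K) (hψ : Function.Surjective ψ) :
    ↥(fiberProduct φ ψ) ≃ G × ↥ψ.ker where
  toFun p := (p.1.1, ⟨(Function.surjInv hψ (φ p.1.1))⁻¹ * p.1.2, by
    have hp : φ p.1.1 = ψ p.1.2 := p.2
    simp [MonoidHom.mem_ker, Function.surjInv_eq hψ, ← hp]⟩)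
  invFun q := ⟨(q.1, Function.surjInv hψ (φ q.1) * q.2.1), by
    have hq : ψ q.2.1 = 1 := q.2.2
    show φ q.1 = ψ (Function.surjInv hψ (φ q.1) * q.2.1)
    simp only [fiberProduct, Subgroup.mem_mk, Set.mem_setOf_eq, map_mul, hq,
      Function.surjInv_eq hψ, mul_one]⟩
  left_inv p := by
    ext
    · rfl
    · simp
  right_inv q := by
    ext
    · rfl
    · simp

theorem fiberProduct_card {G H K : Type*} [Group G] [Group H] [Group K]
    (φ : G →* K) (ψ : H →* K) (hψ : Function.Surjective ψ) :
    Nat.card ↥(fiberProduct φ ψ) = Nat.card G * Nat.card ↥ψ.ker := by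
  rw [Nat.card_congr (fiberProductEquiv φ ψ hψ), Nat.card_prod]

theorem card_Wr (n m : ℕ) [NeZero n] : Nat.card (Wr n m) = n ^ m * Nat.factorial m := by
  rw [Nat.card_congr (sdpEquiv _ _ _), Nat.card_prod, Nat.card_eq_fintype_card,
    Nat.card_eq_fintype_card, Fintype.card_perm, Fintype.card_fun]
  simp

theorem sumHom_surj (n m : ℕ) [NeZero m] : Function.Surjective (sumHom n m) := by
  intro g
  refine ⟨SemidirectProduct.inl (Pi.mulSingle 0 g), ?_⟩
  simp [sumHom]

theorem signW_surj (n m : ℕ) (hm : 2 ≤ m) : Function.Surjective (signW n m) := by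
  have h0 : (⟨0, by omega⟩ : Fin m) ≠ ⟨1, by omega⟩ := by simp [Fin.ext_iff]
  intro u
  rcases Int.units_eq_one_or u with rfl | rfl
  · exact ⟨1, map_one _⟩
  · refine ⟨⟨SemidirectProduct.inr (Equiv.swap ⟨0, by omega⟩ ⟨1, by omega⟩), by
      simp [MonoidHom.mem_ker, sumHom]⟩, ?_⟩
    simp [signW, Equiv.Perm.sign_swap h0]

theorem signCorners_surj : Function.Surjective signCorners := by
  intro u
  rcases Int.units_eq_one_or u with rfl | rfl
  · exact ⟨1, map_one _⟩
  · obtain ⟨a, ha⟩ := signW_surj 3 8 (by norm_num) (-1)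
    obtain ⟨b, hb⟩ := signW_surj 2 12 (by norm_num) (-1)
    exact ⟨⟨(a, b), by simp [fiberProduct, ha, hb]⟩, ha⟩

theorem signTau_surj : Function.Surjective signTau := by
  intro u
  rcases Int.units_eq_one_or u with rfl | rfl
  · exact ⟨1, map_one _⟩
  · obtain ⟨r, hr⟩ := signCorners_surj (-1)
    have h0 : (⟨0, by omega⟩ : Fin 24) ≠ ⟨1, by omega⟩ := by simp [Fin.ext_iff]
    refine ⟨⟨(r, Equiv.swap ⟨0, by omega⟩ ⟨1, by omega⟩), by
      simpa [fiberProduct, Equiv.Perm.sign_swap h0] using hr⟩, ?_⟩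
    simp [signTau, Equiv.Perm.sign_swap h0]

theorem signRhoC_surj : Function.Surjective signRhoC := by
  intro u
  rcases Int.units_eq_one_or u with rfl | rfl
  · exact ⟨1, map_one _⟩
  · have h0 : (⟨0, by omega⟩ : Fin 24) ≠ ⟨1, by omega⟩ := by simp [Fin.ext_iff]
    exact ⟨(Equiv.swap ⟨0, by omega⟩ ⟨1, by omega⟩, 1), by
      simp [signRhoC, Equiv.Perm.sign_swap h0]⟩

theorem card_units_int : Nat.card ℤˣ = 2 := by
  simp [Nat.card_eq_fintype_card]

theorem card_WrO (n m : ℕ) [NeZero n] [NeZero m] :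
    n * Nat.card ↥(WrO n m) = n ^ m * Nat.factorial m := by
  have h := card_ker_mul (sumHom n m) (sumHom_surj n m)
  rw [card_Wr] at h
  rw [← h]
  congr 1
  rw [Nat.card_congr Multiplicative.ofAdd.symm, Nat.card_zmod]

end Aux

/-- The Professor's Cube group `R5 = (R3 ×_sign S24) ×_sign (S24 × S24)` has order
`|R3| · (24!)^3 / 4`, which equals
`2582636272886959379162819698174683585918088940054237132144778804568925405184000000000000000`. -/
theorem professor_R5_card :
    Nat.card ↥ProfR5 = Nat.card ↥RubikR3 * (Nat.factorial 24) ^ 3 / 4 ∧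
    Nat.card ↥ProfR5 =
      2582636272886959379162819698174683585918088940054237132144778804568925405184000000000000000 := by
  have hsgn : Function.Surjective (Equiv.Perm.sign : Equiv.Perm (Fin 24) →* ℤˣ) :=
    Equiv.Perm.sign_surjective (Fin 24)
  have hA3 : 3 * Nat.card ↥(WrO 3 8) = 3 ^ 8 * Nat.factorial 8 := card_WrO 3 8
  have hA2 : 2 * Nat.card ↥(WrO 2 12) = 2 ^ 12 * Nat.factorial 12 := card_WrO 2 12
  have hk2 : 2 * Nat.card ↥(signW 2 12).ker = Nat.card ↥(WrO 2 12) := by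
    have h := card_ker_mul (signW 2 12) (signW_surj 2 12 (by norm_num))
    rwa [card_units_int] at h
  have hR3 : Nat.card ↥RubikR3 = Nat.card ↥(WrO 3 8) * Nat.card ↥(signW 2 12).ker :=
    fiberProduct_card _ _ (signW_surj 2 12 (by norm_num))
  have hkA : 2 * Nat.card ↥(Equiv.Perm.sign : Equiv.Perm (Fin 24) →* ℤˣ).ker
      = Nat.factorial 24 := by
    have h := card_ker_mul _ hsgn
    have hp : Nat.card (Equiv.Perm (Fin 24)) = Nat.factorial 24 := by
      rw [Nat.card_eq_fintype_card, Fintype.card_perm, Fintype.card_fin]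
    rwa [card_units_int, hp] at h
  have hR4 : Nat.card ↥R3xS24 = Nat.card ↥RubikR3 *
      Nat.card ↥(Equiv.Perm.sign : Equiv.Perm (Fin 24) →* ℤˣ).ker :=
    fiberProduct_card _ _ hsgn
  have hkR : 2 * Nat.card ↥signRhoC.ker = Nat.factorial 24 * Nat.factorial 24 := by
    have h := card_ker_mul signRhoC signRhoC_surj
    have hp : Nat.card (Equiv.Perm (Fin 24)) = Nat.factorial 24 := by
      rw [Nat.card_eq_fintype_card, Fintype.card_perm, Fintype.card_fin]
    rwa [card_units_int, Nat.card_prod, hp] at h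
  have hR5 : Nat.card ↥ProfR5 = Nat.card ↥R3xS24 * Nat.card ↥signRhoC.ker :=
    fiberProduct_card _ _ signRhoC_surj
  have hf8 : Nat.factorial 8 = 40320 := by norm_num [Nat.factorial]
  have hf12 : Nat.factorial 12 = 479001600 := by norm_num [Nat.factorial]
  have hf24 : Nat.factorial 24 = 620448401733239439360000 := by norm_num [Nat.factorial]
  rw [hf8] at hA3
  rw [hf12] at hA2
  rw [hf24] at hkA hkR
  have e3 : Nat.card ↥(WrO 3 8) = 88179840 := by omega
  have e2 : Nat.card ↥(WrO 2 12) = 980995276800 := by omega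
  rw [e2] at hk2
  have ek2 : Nat.card ↥(signW 2 12).ker = 490497638400 := by omega
  have eR3 : Nat.card ↥RubikR3 = 43252003274489856000 := by
    rw [hR3, e3, ek2]
  have ekA : Nat.card ↥(Equiv.Perm.sign : Equiv.Perm (Fin 24) →* ℤˣ).ker
      = 310224200866619719680000 := by omega
  have ekR : Nat.card ↥signRhoC.ker
      = 192478109606665638469868501076483558604800000000 := by omega
  have eR4 : Nat.card ↥R3xS24 = 43252003274489856000 * 310224200866619719680000 := by
    rw [hR4, eR3, ekA]
  have eR5 : Nat.card ↥ProfR5 =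
      2582636272886959379162819698174683585918088940054237132144778804568925405184000000000000000 := by
    rw [hR5, eR4, ekR]
  refine ⟨?_, eR5⟩
  rw [eR5, eR3, hf24]
  norm_num
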